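/- For integers 0 ≤ i, j < n-1 with i ≠ j, one has i ≺ j in P(λ) if and only if i < j and for each t ∈ {1, …, d} one of the following holds: (1) s_{t,i} > s_{t,j} > 0; (2) s_{t,i} = 0 and s_{t,j} = s_{t,j-i}; or (3) s_{t,j} = s_{t,i} > 0 and s_{t,j-i} = 0. -/
import Mathlib

lemma ceil_div_int' (a m : ℤ) (hm : 0 < m) :
    ⌈(a : ℚ) / (m : ℚ)⌉ = a / m + if a % m = 0 then 0 else 1 := by
  have hm' : (0:ℚ) < (m:ℚ) := by exact_mod_cast hm
  have hd := Int.mul_ediv_add_emod a m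
  have hr0 := Int.emod_nonneg a (ne_of_gt hm)
  have hrm := Int.emod_lt_of_pos a hm
  by_cases h : a % m = 0
  · rw [if_pos h, add_zero]
    have : (a:ℚ) / m = ((a / m : ℤ) : ℚ) := by
      rw [div_eq_iff (ne_of_gt hm')]
      exact_mod_cast (Int.ediv_mul_cancel (Int.dvd_of_emod_eq_zero h)).symm
    rw [this, Int.ceil_intCast]
  · simp only [h, if_neg h]
    rw [Int.ceil_eq_iff]
    have h1 : m * (a / m) < a := by omega
    have h2 : a ≤ (a / m + 1) * m := by nlinarith [Int.emod_lt_of_pos a hm]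
    constructor
    · push_cast
      rw [lt_div_iff₀ hm']
      have : ((a/m : ℤ):ℚ) * m < a := by exact_mod_cast (by nlinarith : (a/m) * m < a)
      linarith
    · push_cast
      rw [div_le_iff₀ hm']
      exact_mod_cast h2

lemma key' (m A B C : ℤ) (hm : 2 ≤ m) (hC : A + B = C) :
    ((A / m + if A % m = 0 then 0 else 1) + (B / m + if B % m = 0 then 0 else 1)
      = C / m + if C % m = 0 then 0 else 1) ↔
    ((A % m > C % m ∧ C % m > 0) ∨
     (A % m = 0 ∧ C % m = B % m) ∨
     (C % m = A % m ∧ A % m > 0 ∧ B % m = 0)) := by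
  have hm0 : 0 < m := by omega
  have hdA := Int.mul_ediv_add_emod A m
  have hdB := Int.mul_ediv_add_emod B m
  have hdC := Int.mul_ediv_add_emod C m
  have hA0 := Int.emod_nonneg A (ne_of_gt hm0); have hAm := Int.emod_lt_of_pos A hm0
  have hB0 := Int.emod_nonneg B (ne_of_gt hm0); have hBm := Int.emod_lt_of_pos B hm0
  have hC0 := Int.emod_nonneg C (ne_of_gt hm0); have hCm := Int.emod_lt_of_pos C hm0
  set qa := A / m; set ra := A % m
  set qb := B / m; set rb := B % m
  set qc := C / m; set rc := C % m
  have hrel : m * (qc - qa - qb) = ra + rb - rc := by linarith [hC]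
  have hk01 : qc - qa - qb = 0 ∨ qc - qa - qb = 1 := by
    by_contra hcon
    push_neg at hcon
    rcases lt_or_gt_of_ne hcon.1 with h | h
    · have h1 : qc - qa - qb ≤ -1 := by omega
      have : m * (qc - qa - qb) ≤ m * (-1) := by
        exact mul_le_mul_of_nonneg_left h1 (by omega)
      linarith
    · have h1 : 2 ≤ qc - qa - qb := by omega
      have : m * 2 ≤ m * (qc - qa - qb) := by
        exact mul_le_mul_of_nonneg_left h1 (by omega)
      linarith
  rcases hk01 with hk | hk
  · have hqc : qc = qa + qb := by omega
    have hr : ra + rb = rc := by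
      have := hrel; rw [hk] at this; simp at this; omega
    rw [hqc]
    split_ifs <;> omega
  · have hqc : qc = qa + qb + 1 := by omega
    have hr : ra + rb = rc + m := by
      have := hrel; rw [hk] at this; simp at this; omega
    rw [hqc]
    split_ifs <;> omega


/-- The lattice point `p(b)` of the fundamental parallelepiped `Π_λ`:
`p(b) = ((Σ_t ⌈bλ_t/(n-1)⌉) - b, ⌈bλ_1/(n-1)⌉, …, ⌈bλ_d/(n-1)⌉) ∈ ℤ^{d+1}`. -/
def pfun (d n : ℕ) (lam : Fin d → ℕ) (b : ℤ) : Fin (d + 1) → ℤ :=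
  Fin.cons ((∑ t, ⌈(b * lam t : ℚ) / ((n : ℚ) - 1)⌉) - b)
    (fun t => ⌈(b * lam t : ℚ) / ((n : ℚ) - 1)⌉)

/-- The relation `i ≺ j` of the fundamental parallelepiped poset `P(λ)` on `{0, …, n-2}`:
`i ≺ j` iff there exists `0 < ℓ < n-1` with `p(i) + p(ℓ) = p(j)`. -/
def precRel (d n : ℕ) (lam : Fin d → ℕ) (i j : ℤ) : Prop :=
  ∃ l : ℤ, 0 < l ∧ l < (n : ℤ) - 1 ∧ pfun d n lam i + pfun d n lam l = pfun d n lam j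

/-- For integers `0 ≤ i, j < n-1` with `i ≠ j`, one has `i ≺ j` in `P(λ)` iff
`i < j` and for each `t` one of: (1) `s_{t,i} > s_{t,j} > 0`;
(2) `s_{t,i} = 0` and `s_{t,j} = s_{t,j-i}`; or (3) `s_{t,j} = s_{t,i} > 0` and
`s_{t,j-i} = 0`, where `s_{t,b}` is the remainder of `b·λ_t` upon division by `n-1`. -/
theorem stmt_6 (d n : ℕ) (hd : 1 ≤ d) (hn : 3 ≤ n) (lam : Fin d → ℕ)
    (hpos : ∀ t, 0 < lam t) (hsum : ∑ t, lam t = n)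
    (s : Fin d → ℤ → ℤ) (hs : ∀ t b, s t b = (b * lam t) % ((n : ℤ) - 1))
    (i j : ℤ) (hi0 : 0 ≤ i) (hi1 : i < (n : ℤ) - 1)
    (hj0 : 0 ≤ j) (hj1 : j < (n : ℤ) - 1) (hij : i ≠ j) :
    precRel d n lam i j ↔
      i < j ∧ ∀ t : Fin d,
        (s t i > s t j ∧ s t j > 0) ∨
        (s t i = 0 ∧ s t j = s t (j - i)) ∨
        (s t j = s t i ∧ s t i > 0 ∧ s t (j - i) = 0) := by

  have hn' : (3:ℤ) ≤ (n:ℤ) := by exact_mod_cast hn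
  set m : ℤ := (n:ℤ) - 1 with hmdef
  have hm : 2 ≤ m := by omega
  have hm0 : 0 < m := by omega
  have hcast : ((n:ℚ) - 1) = (m:ℚ) := by push_cast [hmdef]; ring
  have hpf : ∀ (b : ℤ) (t : Fin d),
      pfun d n lam b t.succ = (b * lam t) / m + if (b * lam t) % m = 0 then 0 else 1 := by
    intro b t
    simp only [pfun, Fin.cons_succ]
    rw [hcast, ← ceil_div_int' (b * lam t) m hm0]
    norm_cast
  have hz : ∀ b : ℤ, pfun d n lam b 0 = (∑ t : Fin d, pfun d n lam b t.succ) - b := by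
    intro b
    simp [pfun]
  have hkey : ∀ t : Fin d,
      (pfun d n lam i t.succ + pfun d n lam (j - i) t.succ = pfun d n lam j t.succ) ↔
      ((s t i > s t j ∧ s t j > 0) ∨
       (s t i = 0 ∧ s t j = s t (j - i)) ∨
       (s t j = s t i ∧ s t i > 0 ∧ s t (j - i) = 0)) := by
    intro t
    rw [hpf, hpf, hpf, hs, hs, hs]
    exact key' m (i * lam t) ((j - i) * lam t) (j * lam t) hm (by ring)
  constructor
  · rintro ⟨l, hl0, hl1, heq⟩
    have ht : ∀ t : Fin d,
        pfun d n lam i t.succ + pfun d n lam l t.succ = pfun d n lam j t.succ := by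
      intro t
      have := congrFun heq t.succ
      simpa using this
    have h0 := congrFun heq (0 : Fin (d+1))
    rw [Pi.add_apply, hz, hz, hz] at h0
    have hsum2 : (∑ t : Fin d, pfun d n lam i t.succ) + (∑ t : Fin d, pfun d n lam l t.succ)
        = ∑ t : Fin d, pfun d n lam j t.succ := by
      rw [← Finset.sum_add_distrib]
      exact Finset.sum_congr rfl fun t _ => ht t
    have hl : l = j - i := by linarith
    subst hl
    refine ⟨by omega, fun t => (hkey t).mp (ht t)⟩
  · rintro ⟨hij', hall⟩
    refine ⟨j - i, by omega, by omega, ?_⟩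
    funext u
    rw [Pi.add_apply]
    induction u using Fin.cases with
    | zero =>
      rw [hz, hz, hz]
      have hsum2 : (∑ t : Fin d, pfun d n lam i t.succ) + (∑ t : Fin d, pfun d n lam (j - i) t.succ)
          = ∑ t : Fin d, pfun d n lam j t.succ := by
        rw [← Finset.sum_add_distrib]
        exact Finset.sum_congr rfl fun t _ => (hkey t).mpr (hall t)
      linarith
    | succ t => exact (hkey t).mpr (hall t)
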